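/- The q-Stirling number of the second kind satisfies S_q[n,k] = Σ_{w ∈ A(n,k)} q^{A(w)} · (1+q)^{B(w)}, where A(n,k) is the set of allowable RG-words of length n with maximum k, A(w) = Σ_i A_i(w) with A_i(w) = w_i − 1 if max(w_1,…,w_{i−1}) ≥ w_i and 0 otherwise, and B(w) = Σ_i B_i(w) with B_i(w) = 1 if max(w_1,…,w_{i−1}) > w_i and 0 otherwise. -/

import Mathlib

open scoped Classical
open Polynomial

/-- The prefix maximum `max(w_1, …, w_{i-1})` (equal to `0` when `i` is the first index). -/
def pmax {n k : ℕ} (w : Fin n → Fin (k + 1)) (i : Fin n) : ℕ :=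
  (Finset.univ.filter fun j => j < i).sup fun j => (w j : ℕ)

/-- `w` is a restricted growth word of length `n` with maximum letter `k`. -/
def IsRG {n k : ℕ} (w : Fin n → Fin (k + 1)) : Prop :=
  (∀ i, 1 ≤ (w i : ℕ)) ∧ (∀ i, (w i : ℕ) ≤ pmax w i + 1) ∧
    (Finset.univ.sup fun i => (w i : ℕ)) = k

/-- An RG-word is allowable if every even letter appears exactly once. -/
def IsAllowable {n k : ℕ} (w : Fin n → Fin (k + 1)) : Prop :=
  ∀ j : ℕ, Even j → (Finset.univ.filter fun i => (w i : ℕ) = j).card ≤ 1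

/-- The set `A(n,k)` of allowable RG-words of length `n` with maximum letter `k`. -/
noncomputable def AllowRG (n k : ℕ) : Finset (Fin n → Fin (k + 1)) :=
  Finset.univ.filter fun w => IsRG w ∧ IsAllowable w

/-- The statistic `A(w) = Σᵢ Aᵢ(w)`, where `Aᵢ(w) = wᵢ - 1` if `max(w₁,…,w_{i-1}) ≥ wᵢ`
and `0` otherwise. -/
def Astat {n k : ℕ} (w : Fin n → Fin (k + 1)) : ℕ :=
  ∑ i : Fin n, if (w i : ℕ) ≤ pmax w i then (w i : ℕ) - 1 else 0

/-- The statistic `B(w) = Σᵢ Bᵢ(w)`, where `Bᵢ(w) = 1` if `max(w₁,…,w_{i-1}) > wᵢ`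
and `0` otherwise. -/
def Bstat {n k : ℕ} (w : Fin n → Fin (k + 1)) : ℕ :=
  ∑ i : Fin n, if (w i : ℕ) < pmax w i then 1 else 0

/-- The `q`-Stirling numbers of the second kind. -/
noncomputable def qS : ℕ → ℕ → Polynomial ℤ
  | 0, 0 => 1
  | 0, _ + 1 => 0
  | _ + 1, 0 => 0
  | n + 1, k + 1 => qS n k + (∑ i ∈ Finset.range (k + 1), X ^ i) * qS n (k + 1)



lemma pmax_congr {n k k' : ℕ} (w : Fin n → Fin (k + 1)) (v : Fin n → Fin (k' + 1))
    (h : ∀ i, (w i : ℕ) = (v i : ℕ)) (i : Fin n) : pmax w i = pmax v i := by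
  unfold pmax
  exact Finset.sup_congr rfl (fun j _ => h j)

lemma pmax_castSucc {n k : ℕ} (w : Fin (n + 1) → Fin (k + 1)) (i : Fin n) :
    pmax w (Fin.castSucc i) = pmax (fun j => w (Fin.castSucc j)) i := by
  unfold pmax
  apply le_antisymm
  · apply Finset.sup_le
    intro j hj
    simp only [Finset.mem_filter, Finset.mem_univ, true_and] at hj
    have hjn : (j : ℕ) < n := lt_of_lt_of_le (by exact_mod_cast hj) (by simp [Fin.le_def, i.isLt.le])
    have : j = Fin.castSucc ⟨(j : ℕ), hjn⟩ := by simp [Fin.ext_iff]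
    rw [this]
    refine Finset.le_sup (f := fun j : Fin n => (w (Fin.castSucc j) : ℕ)) ?_
    simp only [Finset.mem_filter, Finset.mem_univ, true_and, Fin.lt_def]
    exact_mod_cast hj
  · apply Finset.sup_le
    intro j hj
    simp only [Finset.mem_filter, Finset.mem_univ, true_and] at hj
    refine Finset.le_sup (f := fun j : Fin (n+1) => (w j : ℕ)) ?_
    simp only [Finset.mem_filter, Finset.mem_univ, true_and, Fin.lt_def]
    exact_mod_cast hj

lemma pmax_last {n k : ℕ} (w : Fin (n + 1) → Fin (k + 1)) :
    pmax w (Fin.last n) = Finset.univ.sup fun i : Fin n => (w (Fin.castSucc i) : ℕ) := by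
  unfold pmax
  apply le_antisymm
  · apply Finset.sup_le
    intro j hj
    simp only [Finset.mem_filter, Finset.mem_univ, true_and] at hj
    have hjn : (j : ℕ) < n := by simpa [Fin.lt_def] using hj
    have : j = Fin.castSucc ⟨(j : ℕ), hjn⟩ := by simp [Fin.ext_iff]
    rw [this]
    exact Finset.le_sup (f := fun i : Fin n => (w (Fin.castSucc i) : ℕ)) (Finset.mem_univ _)
  · apply Finset.sup_le
    intro j _
    refine Finset.le_sup (f := fun j : Fin (n+1) => (w j : ℕ)) ?_
    simp only [Finset.mem_filter, Finset.mem_univ, true_and, Fin.lt_def, Fin.val_last]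
    exact j.isLt






lemma Astat_succ {n k : ℕ} (w : Fin (n + 1) → Fin (k + 1)) :
    Astat w = Astat (fun i => w (Fin.castSucc i)) +
      (if (w (Fin.last n) : ℕ) ≤ pmax w (Fin.last n) then (w (Fin.last n) : ℕ) - 1 else 0) := by
  unfold Astat
  rw [Fin.sum_univ_castSucc]
  congr 1
  exact Finset.sum_congr rfl fun i _ => by rw [pmax_castSucc]

lemma Bstat_succ {n k : ℕ} (w : Fin (n + 1) → Fin (k + 1)) :
    Bstat w = Bstat (fun i => w (Fin.castSucc i)) +
      (if (w (Fin.last n) : ℕ) < pmax w (Fin.last n) then 1 else 0) := by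
  unfold Bstat
  rw [Fin.sum_univ_castSucc]
  congr 1
  exact Finset.sum_congr rfl fun i _ => by rw [pmax_castSucc]

lemma Astat_congr {n k k' : ℕ} (w : Fin n → Fin (k + 1)) (v : Fin n → Fin (k' + 1))
    (h : ∀ i, (w i : ℕ) = (v i : ℕ)) : Astat w = Astat v := by
  unfold Astat
  exact Finset.sum_congr rfl fun i _ => by rw [pmax_congr w v h, h]

lemma Bstat_congr {n k k' : ℕ} (w : Fin n → Fin (k + 1)) (v : Fin n → Fin (k' + 1))
    (h : ∀ i, (w i : ℕ) = (v i : ℕ)) : Bstat w = Bstat v := by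
  unfold Bstat
  exact Finset.sum_congr rfl fun i _ => by rw [pmax_congr w v h, h]

lemma sup_succ {n : ℕ} (f : Fin (n + 1) → ℕ) :
    Finset.univ.sup f = max (Finset.univ.sup fun i : Fin n => f (Fin.castSucc i)) (f (Fin.last n)) := by
  rw [Fin.univ_castSuccEmb, Finset.sup_cons, Finset.sup_map]
  rw [max_comm]
  rfl

/-- An RG word attains every value between 1 and its sup. -/
lemma rg_attains {n k : ℕ} (w : Fin n → Fin (k + 1)) (hw : IsRG w) (j : ℕ) (h1 : 1 ≤ j)
    (h2 : j ≤ k) : ∃ i, (w i : ℕ) = j := by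
  obtain ⟨hge, hle, hsup⟩ := hw
  have hne : (Finset.univ.filter fun i : Fin n => j ≤ (w i : ℕ)).Nonempty := by
    by_contra h
    rw [Finset.not_nonempty_iff_eq_empty, Finset.filter_eq_empty_iff] at h
    have : (Finset.univ.sup fun i : Fin n => (w i : ℕ)) < j := by
      rcases Nat.eq_zero_or_pos n with hn | hn
      · subst hn
        simp only [Finset.univ_eq_empty, Finset.sup_empty]
        simp; omega
      · apply Finset.sup_lt_iff (show ⊥ < j by simp; omega) |>.2
        intro i _
        have := h (Finset.mem_univ i)
        omega
    omega
  set i := Finset.min' _ hne with hi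
  have hji : j ≤ (w i : ℕ) := by
    have := Finset.min'_mem _ hne
    simp only [Finset.mem_filter] at this
    exact this.2
  refine ⟨i, le_antisymm ?_ hji⟩
  have hp : pmax w i < j := by
    unfold pmax
    rcases Nat.eq_zero_or_pos j with h0 | h0
    · omega
    apply Finset.sup_lt_iff (show ⊥ < j by simp; omega) |>.2
    intro b hb
    simp only [Finset.mem_filter, Finset.mem_univ, true_and] at hb
    by_contra hc
    push_neg at hc
    have hbmem : b ∈ Finset.univ.filter fun i : Fin n => j ≤ (w i : ℕ) := by
      simp only [Finset.mem_filter, Finset.mem_univ, true_and]; exact hc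
    exact absurd (Finset.min'_le _ _ hbmem) (not_le.2 hb)
  have := hle i
  omega

lemma odd_pair_sum (m : ℕ) :
    ∑ a ∈ (Finset.Icc 1 m).filter (fun a => ¬ Even a), ((X : Polynomial ℤ) ^ (a - 1) + X ^ a)
      = ∑ i ∈ Finset.range (2 * ((m + 1) / 2)), X ^ i := by
  induction m with
  | zero => simp
  | succ m ih =>
    rw [show Finset.Icc 1 (m + 1) = insert (m + 1) (Finset.Icc 1 m) by
      ext a; simp only [Finset.mem_Icc, Finset.mem_insert]; omega]
    rw [Finset.filter_insert]
    by_cases hE : Even (m + 1)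
    · simp only [hE, not_true_eq_false, if_false]
      rw [ih]
      obtain ⟨t, ht⟩ := hE
      congr 2
      omega
    · simp only [hE, not_false_eq_true, if_true]
      rw [Finset.sum_insert (by simp), ih]
      obtain ⟨t, ht⟩ : Odd (m + 1) := Nat.not_even_iff_odd.1 hE
      have h2 : 2 * ((m + 1 + 1) / 2) = 2 * ((m + 1) / 2) + 2 := by omega
      rw [h2, Finset.sum_range_succ, Finset.sum_range_succ]
      have hm : 2 * ((m + 1) / 2) = m := by omega
      rw [hm]
      have e1 : m + 1 - 1 = m := by omega
      rw [e1]
      ring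

lemma odd_letter_sum (k : ℕ) :
    ∑ a ∈ (Finset.Icc 1 (k + 1)).filter (fun a => ¬ Even a),
      (X : Polynomial ℤ) ^ (a - 1) * (1 + X) ^ (if a < k + 1 then 1 else 0)
      = ∑ i ∈ Finset.range (k + 1), X ^ i := by
  have key : ∀ a ∈ (Finset.Icc 1 (k + 1)).filter (fun a => ¬ Even a), a < k + 1 →
      (X : Polynomial ℤ) ^ (a - 1) * (1 + X) ^ (if a < k + 1 then 1 else 0)
        = X ^ (a - 1) + X ^ a := by
    intro a ha hlt
    simp only [Finset.mem_filter, Finset.mem_Icc] at ha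
    rw [if_pos hlt, pow_one]
    have : a - 1 + 1 = a := by omega
    calc (X : Polynomial ℤ) ^ (a-1) * (1 + X) = X ^ (a-1) + X ^ (a - 1 + 1) := by ring
    _ = X ^ (a-1) + X ^ a := by rw [this]
  rcases Nat.even_or_odd k with hk | hk
  · -- k even, so k+1 odd is in the set with indicator 0
    have hmem : k + 1 ∈ (Finset.Icc 1 (k + 1)).filter (fun a => ¬ Even a) := by
      simp only [Finset.mem_filter, Finset.mem_Icc]
      refine ⟨⟨by omega, le_refl _⟩, ?_⟩
      rw [Nat.even_add_one]
      simpa using hk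
    rw [← Finset.insert_erase hmem, Finset.sum_insert (Finset.notMem_erase _ _)]
    rw [if_neg (lt_irrefl _), pow_zero, mul_one]
    have herase : ((Finset.Icc 1 (k + 1)).filter (fun a => ¬ Even a)).erase (k + 1)
        = (Finset.Icc 1 k).filter (fun a => ¬ Even a) := by
      ext a
      simp only [Finset.mem_erase, Finset.mem_filter, Finset.mem_Icc]
      constructor
      · rintro ⟨hne, ⟨h1, h2⟩, h3⟩; exact ⟨⟨h1, by omega⟩, h3⟩
      · rintro ⟨⟨h1, h2⟩, h3⟩; exact ⟨by omega, ⟨h1, by omega⟩, h3⟩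
    rw [herase]
    have : ∑ a ∈ (Finset.Icc 1 k).filter (fun a => ¬ Even a),
        (X : Polynomial ℤ) ^ (a - 1) * (1 + X) ^ (if a < k + 1 then 1 else 0)
        = ∑ a ∈ (Finset.Icc 1 k).filter (fun a => ¬ Even a), ((X : Polynomial ℤ) ^ (a-1) + X ^ a) := by
      apply Finset.sum_congr rfl
      intro a ha
      simp only [Finset.mem_filter, Finset.mem_Icc] at ha
      have hlt : a < k + 1 := by omega
      rw [if_pos hlt, pow_one]
      have h1 : a - 1 + 1 = a := by omega
      calc (X : Polynomial ℤ) ^ (a-1) * (1 + X) = X ^ (a-1) + X ^ (a - 1 + 1) := by ring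
      _ = X ^ (a-1) + X ^ a := by rw [h1]
    rw [this, odd_pair_sum]
    have h2 : 2 * ((k + 1) / 2) = k := by
      obtain ⟨t, ht⟩ := hk; omega
    rw [h2, Finset.sum_range_succ]
    have e1 : k + 1 - 1 = k := by omega
    rw [e1]
    ring
  · -- k odd, so k+1 even, all elements have indicator 1
    have : ∑ a ∈ (Finset.Icc 1 (k + 1)).filter (fun a => ¬ Even a),
        (X : Polynomial ℤ) ^ (a - 1) * (1 + X) ^ (if a < k + 1 then 1 else 0)
        = ∑ a ∈ (Finset.Icc 1 (k + 1)).filter (fun a => ¬ Even a), ((X : Polynomial ℤ) ^ (a-1) + X ^ a) := by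
      apply Finset.sum_congr rfl
      intro a ha
      simp only [Finset.mem_filter, Finset.mem_Icc] at ha
      have hlt : a < k + 1 := by
        rcases Nat.lt_or_ge a (k + 1) with h | h
        · exact h
        · exfalso
          have : a = k + 1 := by omega
          apply ha.2
          rw [this, Nat.even_add_one]
          simpa [Nat.not_even_iff_odd] using hk
      exact key a (by simpa [Finset.mem_filter, Finset.mem_Icc] using ha) hlt
    rw [this, odd_pair_sum]
    obtain ⟨t, ht⟩ := hk
    have e1 : 2 * ((k + 1 + 1) / 2) = k + 1 := by omega
    rw [e1]

lemma mem_AllowRG {n k : ℕ} {w : Fin n → Fin (k + 1)} :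
    w ∈ AllowRG n k ↔ IsRG w ∧ IsAllowable w := by simp [AllowRG]

lemma count_succ {n k : ℕ} (w : Fin (n + 1) → Fin (k + 1)) (j : ℕ) :
    (Finset.univ.filter fun i => (w i : ℕ) = j).card
      = (Finset.univ.filter fun i : Fin n => (w (Fin.castSucc i) : ℕ) = j).card
        + (if (w (Fin.last n) : ℕ) = j then 1 else 0) := by
  rw [Fin.univ_castSuccEmb, Finset.filter_cons]
  split_ifs with h
  · rw [Finset.card_cons, Finset.filter_map, Finset.card_map]
    rfl
  · rw [Finset.filter_map, Finset.card_map]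
    rfl

def F1 {n k : ℕ} (w : Fin (n + 1) → Fin (k + 2)) : Fin n → Fin (k + 1) :=
  fun i => ⟨min ((w (Fin.castSucc i)) : ℕ) k, Nat.lt_succ_of_le (min_le_right _ _)⟩

def G1 {n k : ℕ} (v : Fin n → Fin (k + 1)) : Fin (n + 1) → Fin (k + 2) :=
  Fin.snoc (fun i => (v i).castSucc) (Fin.last (k + 1))

lemma G1_castSucc {n k : ℕ} (v : Fin n → Fin (k + 1)) (i : Fin n) :
    ((G1 v (Fin.castSucc i)) : ℕ) = (v i : ℕ) := by
  simp [G1]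

lemma G1_last {n k : ℕ} (v : Fin n → Fin (k + 1)) :
    ((G1 v (Fin.last n)) : ℕ) = k + 1 := by
  simp [G1]

-- facts about w in S1
section Case1
variable {n k : ℕ} {w : Fin (n + 1) → Fin (k + 2)}

lemma S1_pmax (hw : IsRG w) (hp : pmax w (Fin.last n) ≤ k) :
    pmax w (Fin.last n) = k ∧ (w (Fin.last n) : ℕ) = k + 1 := by
  obtain ⟨hge, hle, hsup⟩ := hw
  rw [sup_succ] at hsup
  have hpl := pmax_last w
  have h1 : (Finset.univ.sup fun i : Fin n => (w (Fin.castSucc i) : ℕ)) ≤ k := by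
    rw [← hpl]; exact hp
  have hlast : (w (Fin.last n) : ℕ) = k + 1 := by
    rcases max_cases (Finset.univ.sup fun i : Fin n => (w (Fin.castSucc i) : ℕ))
      ((w (Fin.last n)) : ℕ) with ⟨he, _⟩ | ⟨he, _⟩ <;> omega
  have := hle (Fin.last n)
  constructor
  · omega
  · exact hlast

lemma S1_prefix_le (hw : IsRG w) (hp : pmax w (Fin.last n) ≤ k) (i : Fin n) :
    (w (Fin.castSucc i) : ℕ) ≤ k := by
  have := pmax_last w
  calc (w (Fin.castSucc i) : ℕ)
      ≤ Finset.univ.sup fun i : Fin n => (w (Fin.castSucc i) : ℕ) :=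
        Finset.le_sup (f := fun i : Fin n => (w (Fin.castSucc i) : ℕ)) (Finset.mem_univ i)
    _ ≤ k := by rw [← this]; exact hp

lemma F1_coe (hw : IsRG w) (hp : pmax w (Fin.last n) ≤ k) (i : Fin n) :
    ((F1 w i) : ℕ) = (w (Fin.castSucc i) : ℕ) := by
  simp only [F1]
  exact min_eq_left (S1_prefix_le hw hp i)

lemma F1_mem (hw : IsRG w) (ha : IsAllowable w) (hp : pmax w (Fin.last n) ≤ k) :
    F1 w ∈ AllowRG n k := by
  obtain ⟨hpm, hlast⟩ := S1_pmax hw hp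
  obtain ⟨hge, hle, hsup⟩ := hw
  rw [mem_AllowRG]
  have hcoe := F1_coe ⟨hge, hle, hsup⟩ hp
  refine ⟨⟨?_, ?_, ?_⟩, ?_⟩
  · intro i; rw [hcoe i]; exact hge _
  · intro i
    rw [hcoe i, pmax_congr (F1 w) (fun j => w (Fin.castSucc j)) hcoe i, ← pmax_castSucc]
    exact hle _
  · rw [Finset.sup_congr rfl fun i _ => hcoe i]
    rw [← pmax_last]
    exact hpm
  · intro j hj
    have hinj : ∀ b ∈ Finset.univ.filter fun i : Fin n => ((F1 w i) : ℕ) = j,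
        Fin.castSucc b ∈ Finset.univ.filter fun i : Fin (n + 1) => ((w i) : ℕ) = j := by
      intro b hb
      simp only [Finset.mem_filter, Finset.mem_univ, true_and] at hb ⊢
      rw [← hcoe b]; exact hb
    calc (Finset.univ.filter fun i : Fin n => ((F1 w i) : ℕ) = j).card
        ≤ (Finset.univ.filter fun i : Fin (n + 1) => ((w i) : ℕ) = j).card :=
          Finset.card_le_card_of_injOn _ hinj
            (fun a _ b _ h => Fin.castSucc_injective _ h)
      _ ≤ 1 := ha j hj

lemma G1_mem {v : Fin n → Fin (k + 1)} (hv : v ∈ AllowRG n k) :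
    G1 v ∈ AllowRG (n + 1) (k + 1) ∧ pmax (G1 v) (Fin.last n) ≤ k := by
  rw [mem_AllowRG] at hv
  obtain ⟨⟨hge, hle, hsup⟩, ha⟩ := hv
  have hsup' : (Finset.univ.sup fun i : Fin n => ((G1 v (Fin.castSucc i)) : ℕ)) = k := by
    rw [Finset.sup_congr rfl fun i _ => G1_castSucc v i]; exact hsup
  have hpl : pmax (G1 v) (Fin.last n) = k := by rw [pmax_last]; exact hsup'
  refine ⟨?_, by rw [hpl]⟩
  rw [mem_AllowRG]
  refine ⟨⟨?_, ?_, ?_⟩, ?_⟩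
  · intro i
    induction i using Fin.lastCases with
    | last => rw [G1_last]; omega
    | cast i => rw [G1_castSucc]; exact hge i
  · intro i
    induction i using Fin.lastCases with
    | last => rw [G1_last, hpl]
    | cast i =>
      rw [pmax_castSucc]
      have : pmax (fun j => G1 v (Fin.castSucc j)) i = pmax v i :=
        pmax_congr _ _ (fun j => G1_castSucc v j) i
      rw [this]
      calc ((G1 v (Fin.castSucc i)) : ℕ) = (v i : ℕ) := G1_castSucc v i
        _ ≤ pmax v i + 1 := hle i
  · rw [sup_succ, hsup', G1_last]
    omega
  · intro j hj
    rw [count_succ]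
    have hcv : (Finset.univ.filter fun i : Fin n => ((G1 v (Fin.castSucc i)) : ℕ) = j).card
        = (Finset.univ.filter fun i : Fin n => ((v i) : ℕ) = j).card := by
      congr 1
      apply Finset.filter_congr
      intro i _
      rw [G1_castSucc]
    rw [hcv, G1_last]
    by_cases hjk : j = k + 1
    · have : (Finset.univ.filter fun i : Fin n => ((v i) : ℕ) = j).card = 0 := by
        rw [Finset.card_eq_zero, Finset.filter_eq_empty_iff]
        intro i _
        have := (v i).isLt
        omega
      rw [this]
      split_ifs <;> omega
    · rw [if_neg (by omega)]
      simpa using ha j hj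
end Case1

section Case1b
variable {n k : ℕ}

lemma G1_F1 {w : Fin (n + 1) → Fin (k + 2)} (hw : IsRG w) (hp : pmax w (Fin.last n) ≤ k) :
    G1 (F1 w) = w := by
  obtain ⟨hpm, hlast⟩ := S1_pmax hw hp
  funext i
  induction i using Fin.lastCases with
  | last =>
    apply Fin.ext
    rw [G1_last]
    exact hlast.symm
  | cast i =>
    apply Fin.ext
    rw [G1_castSucc, F1_coe hw hp]

lemma F1_G1 (v : Fin n → Fin (k + 1)) (hmem : G1 v ∈ AllowRG (n + 1) (k + 1))
    (hp : pmax (G1 v) (Fin.last n) ≤ k) : F1 (G1 v) = v := by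
  funext i
  apply Fin.ext
  rw [F1_coe (mem_AllowRG.1 hmem).1 hp, G1_castSucc]

lemma F1_weight {w : Fin (n + 1) → Fin (k + 2)} (hw : IsRG w) (hp : pmax w (Fin.last n) ≤ k) :
    Astat w = Astat (F1 w) ∧ Bstat w = Bstat (F1 w) := by
  obtain ⟨hpm, hlast⟩ := S1_pmax hw hp
  have hA : Astat (fun i => w (Fin.castSucc i)) = Astat (F1 w) :=
    Astat_congr _ _ (fun i => (F1_coe hw hp i).symm)
  have hB : Bstat (fun i => w (Fin.castSucc i)) = Bstat (F1 w) :=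
    Bstat_congr _ _ (fun i => (F1_coe hw hp i).symm)
  constructor
  · rw [Astat_succ, hA, if_neg (by omega), Nat.add_zero]
  · rw [Bstat_succ, hB, if_neg (by omega), Nat.add_zero]

lemma case1_sum (n k : ℕ) :
    ∑ w ∈ (AllowRG (n + 1) (k + 1)).filter (fun w => pmax w (Fin.last n) ≤ k),
      (X : Polynomial ℤ) ^ Astat w * (1 + X) ^ Bstat w
    = ∑ v ∈ AllowRG n k, (X : Polynomial ℤ) ^ Astat v * (1 + X) ^ Bstat v := by
  apply Finset.sum_nbij' (i := F1) (j := G1)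
  · intro w hw
    rw [Finset.mem_filter] at hw
    obtain ⟨hmem, hp⟩ := hw
    rw [mem_AllowRG] at hmem
    exact F1_mem hmem.1 hmem.2 hp
  · intro v hv
    rw [Finset.mem_filter]
    exact ⟨(G1_mem hv).1, (G1_mem hv).2⟩
  · intro w hw
    rw [Finset.mem_filter, mem_AllowRG] at hw
    exact G1_F1 hw.1.1 hw.2
  · intro v hv
    exact F1_G1 v (G1_mem hv).1 (G1_mem hv).2
  · intro w hw
    rw [Finset.mem_filter, mem_AllowRG] at hw
    obtain ⟨hA, hB⟩ := F1_weight hw.1.1 hw.2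
    rw [hA, hB]
end Case1b

section Case2
variable {n k : ℕ}

def oddSet (k : ℕ) : Finset ℕ := (Finset.Icc 1 (k + 1)).filter fun a => ¬ Even a

def F2 {n k : ℕ} (w : Fin (n + 1) → Fin (k + 2)) : (Fin n → Fin (k + 2)) × ℕ :=
  (fun i => w (Fin.castSucc i), (w (Fin.last n) : ℕ))

def G2 {n k : ℕ} (p : (Fin n → Fin (k + 2)) × ℕ) : Fin (n + 1) → Fin (k + 2) :=
  Fin.snoc p.1 ⟨min p.2 (k + 1), Nat.lt_succ_of_le (min_le_right _ _)⟩

lemma S2_pmax {w : Fin (n + 1) → Fin (k + 2)} (hw : IsRG w)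
    (hp : ¬ pmax w (Fin.last n) ≤ k) :
    pmax w (Fin.last n) = k + 1 ∧
      (Finset.univ.sup fun i : Fin n => (w (Fin.castSucc i) : ℕ)) = k + 1 := by
  obtain ⟨hge, hle, hsup⟩ := hw
  rw [sup_succ] at hsup
  have hpl := pmax_last w
  have h1 : (Finset.univ.sup fun i : Fin n => (w (Fin.castSucc i) : ℕ)) ≤ k + 1 :=
    le_trans (le_max_left _ _) hsup.le
  constructor
  · omega
  · omega

lemma F2_mem {w : Fin (n + 1) → Fin (k + 2)} (hw : IsRG w) (ha : IsAllowable w)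
    (hp : ¬ pmax w (Fin.last n) ≤ k) :
    (F2 w).1 ∈ AllowRG n (k + 1) ∧ (F2 w).2 ∈ oddSet k := by
  obtain ⟨hpm, hsupv⟩ := S2_pmax hw hp
  obtain ⟨hge, hle, hsup⟩ := hw
  have hvRG : IsRG (F2 w).1 := by
    refine ⟨fun i => hge _, fun i => ?_, hsupv⟩
    show ((w (Fin.castSucc i)) : ℕ) ≤ pmax (fun j => w (Fin.castSucc j)) i + 1
    rw [← pmax_castSucc]
    exact hle _
  have hvA : IsAllowable (F2 w).1 := by
    intro j hj
    calc (Finset.univ.filter fun i : Fin n => (((F2 w).1 i) : ℕ) = j).card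
        ≤ (Finset.univ.filter fun i : Fin (n + 1) => ((w i) : ℕ) = j).card := by
          rw [count_succ w j]; exact Nat.le_add_right _ _
      _ ≤ 1 := ha j hj
  refine ⟨mem_AllowRG.2 ⟨hvRG, hvA⟩, ?_⟩
  simp only [oddSet, Finset.mem_filter, Finset.mem_Icc, F2]
  have h1 : 1 ≤ (w (Fin.last n) : ℕ) := hge _
  have h2 : (w (Fin.last n) : ℕ) ≤ k + 1 := by
    have := (w (Fin.last n)).isLt; omega
  refine ⟨⟨h1, h2⟩, ?_⟩
  intro hEv
  obtain ⟨i, hi⟩ := rg_attains (F2 w).1 hvRG ((w (Fin.last n)) : ℕ) h1 h2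
  have hcount : 2 ≤ (Finset.univ.filter fun i : Fin (n + 1) =>
      ((w i) : ℕ) = ((w (Fin.last n)) : ℕ)).card := by
    rw [count_succ, if_pos rfl]
    have : 1 ≤ (Finset.univ.filter fun i' : Fin n =>
        ((w (Fin.castSucc i')) : ℕ) = ((w (Fin.last n)) : ℕ)).card := by
      rw [Nat.one_le_iff_ne_zero, ← Nat.pos_iff_ne_zero, Finset.card_pos]
      exact ⟨i, by simpa [Finset.mem_filter, F2] using hi⟩
    omega
  have := ha ((w (Fin.last n)) : ℕ) hEv
  omega

lemma G2_coe_last {p : (Fin n → Fin (k + 2)) × ℕ} (hp : p.2 ∈ oddSet k) :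
    ((G2 p (Fin.last n)) : ℕ) = p.2 := by
  simp only [oddSet, Finset.mem_filter, Finset.mem_Icc] at hp
  simp only [G2, Fin.snoc_last]
  exact min_eq_left hp.1.2

lemma G2_castSucc (p : (Fin n → Fin (k + 2)) × ℕ) (i : Fin n) :
    G2 p (Fin.castSucc i) = p.1 i := by
  simp [G2]

lemma G2_mem {p : (Fin n → Fin (k + 2)) × ℕ} (h1 : p.1 ∈ AllowRG n (k + 1))
    (h2 : p.2 ∈ oddSet k) :
    G2 p ∈ AllowRG (n + 1) (k + 1) ∧ ¬ pmax (G2 p) (Fin.last n) ≤ k := by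
  obtain ⟨⟨hge, hle, hsup⟩, ha⟩ := mem_AllowRG.1 h1
  have hodd := h2
  simp only [oddSet, Finset.mem_filter, Finset.mem_Icc] at hodd
  have hsupv : (Finset.univ.sup fun i : Fin n => ((G2 p (Fin.castSucc i)) : ℕ)) = k + 1 := by
    rw [Finset.sup_congr rfl fun i _ => by rw [G2_castSucc]]
    exact hsup
  have hpl : pmax (G2 p) (Fin.last n) = k + 1 := by rw [pmax_last]; exact hsupv
  refine ⟨mem_AllowRG.2 ⟨⟨?_, ?_, ?_⟩, ?_⟩, by omega⟩
  · intro i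
    induction i using Fin.lastCases with
    | last => rw [G2_coe_last h2]; exact hodd.1.1
    | cast i => rw [G2_castSucc]; exact hge i
  · intro i
    induction i using Fin.lastCases with
    | last =>
      rw [G2_coe_last h2, hpl]
      omega
    | cast i =>
      rw [pmax_castSucc, G2_castSucc]
      have : pmax (fun j => G2 p (Fin.castSucc j)) i = pmax p.1 i :=
        pmax_congr _ _ (fun j => by rw [G2_castSucc]) i
      rw [this]
      exact hle i
  · rw [sup_succ, hsupv, G2_coe_last h2]
    omega
  · intro j hj
    rw [count_succ]
    have hcv : (Finset.univ.filter fun i : Fin n => ((G2 p (Fin.castSucc i)) : ℕ) = j).card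
        = (Finset.univ.filter fun i : Fin n => ((p.1 i) : ℕ) = j).card := by
      congr 1
      apply Finset.filter_congr
      intro i _
      rw [G2_castSucc]
    rw [hcv, G2_coe_last h2, if_neg (by rintro rfl; exact hodd.2 hj)]
    simpa using ha j hj

lemma G2_F2 {w : Fin (n + 1) → Fin (k + 2)} (hw : IsRG w) (ha : IsAllowable w)
    (hp : ¬ pmax w (Fin.last n) ≤ k) : G2 (F2 w) = w := by
  have h2 := (F2_mem hw ha hp).2
  funext i
  induction i using Fin.lastCases with
  | last => exact Fin.ext (G2_coe_last h2)
  | cast i => exact G2_castSucc (F2 w) i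

lemma F2_G2 {p : (Fin n → Fin (k + 2)) × ℕ} (h2 : p.2 ∈ oddSet k) :
    F2 (G2 p) = p := by
  apply Prod.ext
  · funext i
    exact G2_castSucc p i
  · exact G2_coe_last h2

lemma G2_weight {p : (Fin n → Fin (k + 2)) × ℕ} (h1 : p.1 ∈ AllowRG n (k + 1))
    (h2 : p.2 ∈ oddSet k) :
    Astat (G2 p) = Astat p.1 + (p.2 - 1) ∧
      Bstat (G2 p) = Bstat p.1 + (if p.2 < k + 1 then 1 else 0) := by
  have hodd := h2
  simp only [oddSet, Finset.mem_filter, Finset.mem_Icc] at hodd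
  obtain ⟨⟨hge, hle, hsup⟩, ha⟩ := mem_AllowRG.1 h1
  have hsupv : (Finset.univ.sup fun i : Fin n => ((G2 p (Fin.castSucc i)) : ℕ)) = k + 1 := by
    rw [Finset.sup_congr rfl fun i _ => by rw [G2_castSucc]]
    exact hsup
  have hpl : pmax (G2 p) (Fin.last n) = k + 1 := by rw [pmax_last]; exact hsupv
  have hA : Astat (fun i => G2 p (Fin.castSucc i)) = Astat p.1 :=
    Astat_congr _ _ (fun i => by rw [G2_castSucc])
  have hB : Bstat (fun i => G2 p (Fin.castSucc i)) = Bstat p.1 :=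
    Bstat_congr _ _ (fun i => by rw [G2_castSucc])
  constructor
  · rw [Astat_succ, hA, G2_coe_last h2, hpl, if_pos (by omega)]
  · rw [Bstat_succ, hB, G2_coe_last h2, hpl]

lemma case2_sum (n k : ℕ) :
    ∑ w ∈ (AllowRG (n + 1) (k + 1)).filter (fun w => ¬ pmax w (Fin.last n) ≤ k),
      (X : Polynomial ℤ) ^ Astat w * (1 + X) ^ Bstat w
    = ∑ p ∈ (AllowRG n (k + 1)) ×ˢ oddSet k,
        (X : Polynomial ℤ) ^ (Astat p.1 + (p.2 - 1)) *
          (1 + X) ^ (Bstat p.1 + (if p.2 < k + 1 then 1 else 0)) := by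
  apply Finset.sum_nbij' (i := F2) (j := G2)
  · intro w hw
    rw [Finset.mem_filter, mem_AllowRG] at hw
    obtain ⟨h1, h2⟩ := F2_mem hw.1.1 hw.1.2 hw.2
    exact Finset.mem_product.2 ⟨h1, h2⟩
  · intro p hp
    rw [Finset.mem_product] at hp
    rw [Finset.mem_filter]
    exact ⟨(G2_mem hp.1 hp.2).1, (G2_mem hp.1 hp.2).2⟩
  · intro w hw
    rw [Finset.mem_filter, mem_AllowRG] at hw
    exact G2_F2 hw.1.1 hw.1.2 hw.2
  · intro p hp
    rw [Finset.mem_product] at hp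
    exact F2_G2 hp.2
  · intro w hw
    rw [Finset.mem_filter, mem_AllowRG] at hw
    have hG := G2_weight (p := F2 w) ?hp1 ?hp2
    case hp1 => exact (F2_mem hw.1.1 hw.1.2 hw.2).1
    case hp2 => exact (F2_mem hw.1.1 hw.1.2 hw.2).2
    rw [← hG.1, ← hG.2, G2_F2 hw.1.1 hw.1.2 hw.2]
end Case2


theorem qS_eq_sum_allowable (n k : ℕ) :
    qS n k = ∑ w ∈ AllowRG n k, X ^ Astat w * (1 + X) ^ Bstat w := by
  induction n generalizing k with
  | zero =>
    cases k with
    | zero =>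
      have hA : AllowRG 0 0 = Finset.univ := by
        apply Finset.eq_univ_of_forall
        intro w
        rw [mem_AllowRG]
        exact ⟨⟨fun i => i.elim0, fun i => i.elim0, by simp⟩, fun j hj => by simp⟩
      rw [hA]
      have h1 : ∀ w : Fin 0 → Fin 1, (X : Polynomial ℤ) ^ Astat w * (1 + X) ^ Bstat w = 1 :=
        fun w => by simp [Astat, Bstat]
      rw [Finset.sum_congr rfl fun w _ => h1 w, Finset.sum_const]
      simp [qS]
    | succ k =>
      have hA : AllowRG 0 (k + 1) = ∅ := by
        rw [Finset.eq_empty_iff_forall_notMem]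
        intro w hw
        obtain ⟨⟨_, _, hsup⟩, _⟩ := mem_AllowRG.1 hw
        simp at hsup
      rw [hA, Finset.sum_empty]
      rfl
  | succ n ih =>
    cases k with
    | zero =>
      have hA : AllowRG (n + 1) 0 = ∅ := by
        rw [Finset.eq_empty_iff_forall_notMem]
        intro w hw
        obtain ⟨⟨hge, _, _⟩, _⟩ := mem_AllowRG.1 hw
        have := hge 0
        have := (w 0).isLt
        omega
      rw [hA, Finset.sum_empty]
      rfl
    | succ k =>
      have hq : qS (n + 1) (k + 1)
          = qS n k + (∑ i ∈ Finset.range (k + 1), X ^ i) * qS n (k + 1) := rfl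
      rw [hq, ih, ih]
      rw [← Finset.sum_filter_add_sum_filter_not (AllowRG (n + 1) (k + 1))
        (fun w => pmax w (Fin.last n) ≤ k)]
      rw [case1_sum, case2_sum]
      congr 1
      rw [Finset.sum_product]
      rw [Finset.mul_sum]
      apply Finset.sum_congr rfl
      intro v _
      have hterm : ∀ a ∈ oddSet k,
          (X : Polynomial ℤ) ^ (Astat v + (a - 1)) *
            (1 + X) ^ (Bstat v + (if a < k + 1 then 1 else 0))
          = (X ^ Astat v * (1 + X) ^ Bstat v) *
            (X ^ (a - 1) * (1 + X) ^ (if a < k + 1 then 1 else 0)) := by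
        intro a _
        rw [pow_add, pow_add]
        ring
      rw [Finset.sum_congr rfl hterm, ← Finset.mul_sum]
      have : ∑ a ∈ oddSet k,
          (X : Polynomial ℤ) ^ (a - 1) * (1 + X) ^ (if a < k + 1 then 1 else 0)
          = ∑ i ∈ Finset.range (k + 1), X ^ i := odd_letter_sum k
      rw [this]
      ring
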